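/- Let ε > 0 and p ∈ (0, 1/2 − ε), and let V be the p-Bernoulli random subset of {0,1}^n. There exists α > 0 depending only on ε such that with high probability no vertex x ∈ V is α-full, i.e., every x ∈ V satisfies |S_1(x) ∩ V| < (1−α)n. -/

import Mathlib

open MeasureTheory ProbabilityTheory ENNReal Filter

noncomputable def randomSubset (n : ℕ) (p : ℝ≥0∞) (hp : p ≤ 1) :
    Measure ((Fin n → Bool) → Bool) :=
  Measure.pi (fun _ => (PMF.ofFintype (fun b => cond b p (1 - p))
    (by simp [Fintype.sum_bool, add_tsub_cancel_of_le hp])).toMeasure)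

lemma cylinder_measure (n : ℕ) (p : ℝ≥0∞) (hp : p ≤ 1) (T : Finset (Fin n → Bool)) :
    randomSubset n p hp {ω | ∀ z ∈ T, ω z = true} = p ^ T.card := by
  classical
  have hset : {ω : (Fin n → Bool) → Bool | ∀ z ∈ T, ω z = true}
      = Set.pi Set.univ (fun z => if z ∈ T then {true} else Set.univ) := by
    ext ω
    simp only [Set.mem_setOf_eq, Set.mem_pi, Set.mem_univ, true_implies]
    refine forall_congr' fun z => ?_
    split_ifs with h <;> simp [h]
  rw [randomSubset, hset, Measure.pi_pi]
  have hb : ∀ z : Fin n → Bool,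
      (PMF.ofFintype (fun b => cond b p (1 - p))
        (by simp [Fintype.sum_bool, add_tsub_cancel_of_le hp])).toMeasure (if z ∈ T then ({true} : Set Bool) else Set.univ)
        = if z ∈ T then p else 1 := by
    intro z
    split_ifs with h
    · rw [PMF.toMeasure_apply_singleton _ _ (measurableSet_singleton _)]
      rfl
    · simp [add_tsub_cancel_of_le hp]
  simp_rw [hb]
  rw [Finset.prod_ite_mem, Finset.univ_inter, Finset.prod_const]

lemma neighbor_card (n : ℕ) (x : Fin n → Bool) :
    (Finset.univ.filter (fun z => hammingDist x z = 1)).card = n := by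
  classical
  have hinj : Function.Injective (fun i : Fin n => Function.update x i (!x i)) := by
    intro i j h
    by_contra hij
    have h2 := congrFun h i
    simp only [Function.update_self] at h2
    rw [Function.update_of_ne hij _ _] at h2
    simp at h2
  have himg : Finset.univ.filter (fun z => hammingDist x z = 1)
      = Finset.univ.image (fun i : Fin n => Function.update x i (!x i)) := by
    ext z
    simp only [Finset.mem_filter, Finset.mem_univ, true_and, Finset.mem_image]
    constructor
    · intro hz
      unfold hammingDist at hz
      obtain ⟨i, hi⟩ := Finset.card_eq_one.mp hz
      refine ⟨i, ?_⟩
      funext j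
      rcases eq_or_ne j i with rfl | hj
      · have hne : x j ≠ z j := by
          have hmem : j ∈ ({j} : Finset (Fin n)) := Finset.mem_singleton_self j
          rw [← hi] at hmem
          simpa using hmem
        rw [Function.update_self]
        cases hx : x j <;> cases hz' : z j <;> simp_all
      · have heq : x j = z j := by
          by_contra hne
          have hmem : j ∈ Finset.univ.filter (fun i => x i ≠ z i) := by simp [hne]
          rw [hi, Finset.mem_singleton] at hmem
          exact hj hmem
        rw [Function.update_of_ne hj, heq]
    · rintro ⟨i, rfl⟩
      unfold hammingDist
      have : (Finset.univ.filter (fun j => x j ≠ Function.update x i (!x i) j)) = {i} := by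
        ext j
        simp only [Finset.mem_filter, Finset.mem_univ, true_and, Finset.mem_singleton]
        rcases eq_or_ne j i with rfl | hj
        · simp [Function.update_self]
        · simp [Function.update_of_ne hj, hj]
      rw [this, Finset.card_singleton]
  rw [himg, Finset.card_image_of_injective _ hinj, Finset.card_univ, Fintype.card_fin]

lemma analytic_bound (ε' q L α : ℝ) (hε'pos : 0 < ε') (hε'le : ε' ≤ 1/4)
    (hq : q = 1/2 - ε') (hL : L = 2/ε')
    (hα : α = Real.logb L ((1-ε')^(-(2:ℝ)⁻¹)))
    (n k : ℕ) (hk : (1-α) * n ≤ (k:ℝ)) (hkn : k ≤ n)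
    (pR : ℝ) (hp0 : 0 ≤ pR) (hpq : pR ≤ q) :
    (2:ℝ)^n * (n.choose k) * pR^k ≤ ((1-ε') ^ ((2:ℝ)⁻¹))^n := by
  have h1ε' : 0 < 1 - ε' := by linarith
  have h1ε'lt : 1 - ε' < 1 := by linarith
  have hLpos : 0 < L := by rw [hL]; positivity
  have hL1 : 1 < L := by rw [hL, lt_div_iff₀ hε'pos]; linarith
  have hqpos : 0 < q := by rw [hq]; linarith
  have hLα : L ^ α = (1-ε')^(-(2:ℝ)⁻¹) := by
    rw [hα]; exact Real.rpow_logb hLpos hL1.ne' (Real.rpow_pos_of_pos h1ε' _)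
  have hfact : 2*(1+q*L) = (1-ε') * L := by
    rw [hq, hL]; field_simp; ring
  have hLα1 : (1-ε') * (L ^ α) = (1-ε') ^ ((2:ℝ)⁻¹) := by
    rw [hLα]
    calc (1-ε') * (1-ε')^(-(2:ℝ)⁻¹)
        = (1-ε')^((1:ℝ)) * (1-ε')^(-(2:ℝ)⁻¹) := by rw [Real.rpow_one]
      _ = (1-ε')^((1:ℝ) + -(2:ℝ)⁻¹) := (Real.rpow_add h1ε' _ _).symm
      _ = (1-ε')^((2:ℝ)⁻¹) := by norm_num
  have hLdiv : (1-ε')*L / L^((1:ℝ)-α) = (1-ε')^((2:ℝ)⁻¹) := by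
    rw [div_eq_iff (ne_of_gt (Real.rpow_pos_of_pos hLpos _)), ← hLα1,
      mul_assoc, ← Real.rpow_add hLpos]
    norm_num
  -- binomial single-term bound
  have hqL0 : 0 ≤ q*L := mul_nonneg hqpos.le hLpos.le
  have hbinom : (n.choose k : ℝ) * (q*L)^k ≤ (1+q*L)^n := by
    have hmem : k ∈ Finset.range (n+1) := Finset.mem_range.mpr (Nat.lt_succ_of_le hkn)
    have hs := Finset.single_le_sum
      (f := fun j => (q*L)^j * 1^(n-j) * ((n.choose j : ℕ) : ℝ))
      (fun j _ => by positivity) hmem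
    rw [← add_pow] at hs
    calc (n.choose k : ℝ) * (q*L)^k = (q*L)^k * 1^(n-k) * (n.choose k : ℝ) := by ring
      _ ≤ (q*L+1)^n := hs
      _ = (1+q*L)^n := by ring_nf
  have hCq : (n.choose k : ℝ) * q^k ≤ (1+q*L)^n / L^k := by
    rw [le_div_iff₀ (by positivity)]
    calc (n.choose k : ℝ) * q^k * L^k = (n.choose k : ℝ) * (q*L)^k := by
          rw [mul_pow]; ring
      _ ≤ (1+q*L)^n := hbinom
  have hLkge : L ^ (((1:ℝ)-α) * n) ≤ (L:ℝ)^k := by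
    rw [← Real.rpow_natCast L k]
    exact (Real.rpow_le_rpow_left_iff hL1).mpr hk
  have h1qL : (0:ℝ) ≤ (1+q*L) := by nlinarith
  calc (2:ℝ)^n * (n.choose k) * pR^k
      ≤ (2:ℝ)^n * (n.choose k) * q^k := by
        gcongr
      _ = (2:ℝ)^n * ((n.choose k : ℝ) * q^k) := by ring
      _ ≤ (2:ℝ)^n * ((1+q*L)^n / L^k) := by gcongr
      _ ≤ (2:ℝ)^n * ((1+q*L)^n / L^(((1:ℝ)-α) * n)) := by
        gcongr
      _ = ((1-ε') ^ ((2:ℝ)⁻¹))^n := by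
        rw [Real.rpow_mul hLpos.le, Real.rpow_natCast]
        calc (2:ℝ)^n * ((1+q*L)^n / (L^((1:ℝ)-α))^n)
            = (2*(1+q*L))^n / (L^((1:ℝ)-α))^n := by rw [mul_pow]; ring
          _ = ((1-ε')*L)^n / (L^((1:ℝ)-α))^n := by rw [hfact]
          _ = ((1-ε')*L / L^((1:ℝ)-α))^n := (div_pow _ _ n).symm
          _ = ((1-ε')^((2:ℝ)⁻¹))^n := by rw [hLdiv]

/-- For `p ∈ (0, 1/2 − ε)` there exists `α > 0` (depending only on `ε`) such that with
high probability no vertex `x ∈ V` is `α`-full: every `x ∈ V` has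
`|S₁(x) ∩ V| < (1−α)n`. -/
theorem stmt_17 (ε : ℝ) (hε : 0 < ε) :
    ∃ α : ℝ, 0 < α ∧ ∀ (p : ℕ → ℝ≥0∞) (hp1 : ∀ n, p n ≤ 1),
      (∀ n, 0 < (p n).toReal ∧ (p n).toReal < 1 / 2 - ε) →
      Tendsto (fun n =>
        randomSubset n (p n) (hp1 n)
          {ω | ∀ x : Fin n → Bool, ω x = true →
            (Set.ncard {z : Fin n → Bool | hammingDist x z = 1 ∧ ω z = true} : ℝ)
              < (1 - α) * n})
        atTop (nhds 1) := by
  classical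
  set ε' : ℝ := min ε (1/4) with hε'def
  have hε'pos : 0 < ε' := lt_min hε (by norm_num)
  have hε'le : ε' ≤ 1/4 := min_le_right _ _
  have hε'ε : ε' ≤ ε := min_le_left _ _
  set q : ℝ := 1/2 - ε' with hqdef
  set L : ℝ := 2 / ε' with hLdef
  have h1ε' : 0 < 1 - ε' := by linarith
  have h1ε'lt : 1 - ε' < 1 := by linarith
  have hLpos : 0 < L := by rw [hLdef]; positivity
  have hL1 : 1 < L := by rw [hLdef, lt_div_iff₀ hε'pos]; linarith
  set α : ℝ := Real.logb L ((1 - ε') ^ (-(2:ℝ)⁻¹)) with hαdef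
  have hx1 : 1 < (1 - ε') ^ (-(2:ℝ)⁻¹) := by
    rw [Real.one_lt_rpow_iff_of_pos h1ε']
    right
    exact ⟨h1ε'lt, by norm_num⟩
  have hαpos : 0 < α := Real.logb_pos hL1 hx1
  set r : ℝ := (1 - ε') ^ ((2:ℝ)⁻¹) with hrdef
  have hr0 : 0 ≤ r := Real.rpow_nonneg h1ε'.le _
  have hr1 : r < 1 := Real.rpow_lt_one h1ε'.le h1ε'lt (by norm_num)
  refine ⟨α, hαpos, ?_⟩
  intro p hp1 hp
  have key : ∀ n : ℕ, 1 - ENNReal.ofReal (r ^ n) ≤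
      randomSubset n (p n) (hp1 n)
        {ω | ∀ x : Fin n → Bool, ω x = true →
          (Set.ncard {z : Fin n → Bool | hammingDist x z = 1 ∧ ω z = true} : ℝ)
            < (1 - α) * n} := by
    intro n
    set μ := randomSubset n (p n) (hp1 n) with hμdef
    haveI : IsProbabilityMeasure μ := by
      rw [hμdef, randomSubset]; infer_instance
    set k : ℕ := ⌈(1 - α) * (n:ℝ)⌉₊ with hkdef
    have hkge : (1 - α) * (n:ℝ) ≤ (k:ℝ) := Nat.le_ceil _
    have hkn : k ≤ n := Nat.ceil_le.mpr (by nlinarith [Nat.cast_nonneg (α := ℝ) n])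
    set E := {ω : (Fin n → Bool) → Bool | ∀ x : Fin n → Bool, ω x = true →
      (Set.ncard {z : Fin n → Bool | hammingDist x z = 1 ∧ ω z = true} : ℝ)
        < (1 - α) * n} with hEdef
    set N : (Fin n → Bool) → Finset (Fin n → Bool) :=
      fun x => Finset.univ.filter (fun z => hammingDist x z = 1) with hNdef
    set bad : (Fin n → Bool) → Set ((Fin n → Bool) → Bool) :=
      fun x => ⋃ T ∈ Finset.powersetCard k (N x), {ω | ∀ z ∈ T, ω z = true} with hbaddef
    have hcompl : Eᶜ ⊆ ⋃ x : Fin n → Bool, bad x := by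
      intro ω hω
      simp only [hEdef, Set.mem_compl_iff, Set.mem_setOf_eq, not_forall, not_lt] at hω
      obtain ⟨x, hx, hcard⟩ := hω
      set F := Finset.univ.filter (fun z => hammingDist x z = 1 ∧ ω z = true) with hFdef
      have hFs : {z : Fin n → Bool | hammingDist x z = 1 ∧ ω z = true} = ↑F := by
        ext z; simp [hFdef]
      rw [hFs, Set.ncard_coe_finset] at hcard
      have hkF : k ≤ F.card := Nat.ceil_le.mpr hcard
      obtain ⟨T, hTF, hTcard⟩ := Finset.exists_subset_card_eq hkF
      refine Set.mem_iUnion.mpr ⟨x, ?_⟩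
      have hTN : T ∈ Finset.powersetCard k (N x) := by
        rw [Finset.mem_powersetCard]
        refine ⟨hTF.trans ?_, hTcard⟩
        intro z hz
        simp only [hFdef, Finset.mem_filter] at hz
        simp [hNdef, hz.2.1]
      exact Set.mem_biUnion hTN (fun z hz => by
        have := hTF hz
        simp only [hFdef, Finset.mem_filter] at this
        exact this.2.2)
    have hμbad : ∀ x : Fin n → Bool, μ (bad x) ≤ (n.choose k : ℝ≥0∞) * (p n)^k := by
      intro x
      refine le_trans (measure_biUnion_finset_le _ _) ?_
      have hterm : ∀ T ∈ Finset.powersetCard k (N x),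
          μ {ω : (Fin n → Bool) → Bool | ∀ z ∈ T, ω z = true} = (p n)^k := by
        intro T hT
        rw [hμdef, cylinder_measure, (Finset.mem_powersetCard.mp hT).2]
      rw [Finset.sum_congr rfl hterm, Finset.sum_const, Finset.card_powersetCard]
      rw [hNdef]
      simp only [neighbor_card n x, nsmul_eq_mul]
      exact le_rfl
    have hEc : μ Eᶜ ≤ ((2^n * n.choose k : ℕ) : ℝ≥0∞) * (p n)^k := by
      calc μ Eᶜ ≤ μ (⋃ x : Fin n → Bool, bad x) := measure_mono hcompl
        _ ≤ ∑ x : Fin n → Bool, μ (bad x) := measure_iUnion_fintype_le _ _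
        _ ≤ ∑ _x : Fin n → Bool, (n.choose k : ℝ≥0∞) * (p n)^k :=
            Finset.sum_le_sum (fun x _ => hμbad x)
        _ = (Fintype.card (Fin n → Bool) : ℝ≥0∞) * ((n.choose k : ℝ≥0∞) * (p n)^k) := by
            rw [Finset.sum_const, Finset.card_univ, nsmul_eq_mul]
        _ = ((2^n * n.choose k : ℕ) : ℝ≥0∞) * (p n)^k := by
            rw [Fintype.card_fun, Fintype.card_bool, Fintype.card_fin]
            push_cast
            ring
    have hreal : (2:ℝ)^n * (n.choose k) * (p n).toReal^k ≤ r ^ n := by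
      refine analytic_bound ε' q L α hε'pos hε'le hqdef hLdef hαdef n k hkge hkn
        (p n).toReal ENNReal.toReal_nonneg ?_
      have := (hp n).2
      rw [hqdef]; linarith
    have hEc2 : μ Eᶜ ≤ ENNReal.ofReal (r ^ n) := by
      refine le_trans hEc ?_
      have hfin : ((2^n * n.choose k : ℕ) : ℝ≥0∞) * (p n)^k ≠ ∞ := by
        refine ENNReal.mul_ne_top (ENNReal.natCast_ne_top _) ?_
        exact ENNReal.pow_ne_top (lt_of_le_of_lt (hp1 n) ENNReal.one_lt_top).ne
      rw [← ENNReal.ofReal_toReal hfin]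
      apply ENNReal.ofReal_le_ofReal
      rw [ENNReal.toReal_mul, ENNReal.toReal_pow, ENNReal.toReal_natCast]
      calc ((2^n * n.choose k : ℕ) : ℝ) * (p n).toReal^k
          = (2:ℝ)^n * (n.choose k) * (p n).toReal^k := by push_cast; ring
        _ ≤ r ^ n := hreal
    have hone : (1:ℝ≥0∞) ≤ μ E + μ Eᶜ := by
      have huniv : (Set.univ : Set ((Fin n → Bool) → Bool)) ⊆ E ∪ Eᶜ := by
        rw [Set.union_compl_self]
      calc (1:ℝ≥0∞) = μ Set.univ := (measure_univ (μ := μ)).symm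
        _ ≤ μ (E ∪ Eᶜ) := measure_mono huniv
        _ ≤ μ E + μ Eᶜ := measure_union_le _ _
    calc 1 - ENNReal.ofReal (r ^ n) ≤ 1 - μ Eᶜ := tsub_le_tsub_left hEc2 1
      _ ≤ μ E := by rw [tsub_le_iff_right]; exact hone
  have hub : ∀ n : ℕ, randomSubset n (p n) (hp1 n)
      {ω | ∀ x : Fin n → Bool, ω x = true →
        (Set.ncard {z : Fin n → Bool | hammingDist x z = 1 ∧ ω z = true} : ℝ)
          < (1 - α) * n} ≤ 1 := by
    intro n
    haveI : IsProbabilityMeasure (randomSubset n (p n) (hp1 n)) := by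
      rw [randomSubset]; infer_instance
    exact prob_le_one
  refine tendsto_of_tendsto_of_tendsto_of_le_of_le ?_ tendsto_const_nhds key hub
  have h0 : Tendsto (fun n : ℕ => ENNReal.ofReal (r ^ n)) atTop (nhds 0) := by
    have := ENNReal.tendsto_ofReal
      (tendsto_pow_atTop_nhds_zero_of_lt_one hr0 hr1)
    simpa using this
  have := ENNReal.Tendsto.sub
    (tendsto_const_nhds : Tendsto (fun _ : ℕ => (1:ℝ≥0∞)) atTop (nhds 1)) h0
    (Or.inl ENNReal.one_ne_top)
  simpa using this
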